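/- Let G be a simple graph and X a simplicial set of vertices of G, i.e., N[X] induces a chordal subgraph of G and N(X) induces a clique of G. Then no hole of G contains a vertex of X. -/

import Mathlib

open SimpleGraph

variable {V : Type*}

section Aux
variable {V : Type*} {G : SimpleGraph V}

lemma getVert_eq_support_getD {u v : V} (p : G.Walk u v) :
    ∀ i, i ≤ p.length → p.getVert i = p.support.getD i v := by
  induction p with
  | nil => intro i hi; obtain rfl := Nat.le_zero.mp hi; simp
  | cons h q ih =>
    intro i hi
    cases i with
    | zero => simp
    | succ i =>
      simp only [Walk.getVert_cons_succ, Walk.support_cons, List.getD_cons_succ]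
      exact ih i (by simpa using hi)

lemma cycle_getVert_injOn {v : V} {c : G.Walk v v} (hc : c.IsCycle) :
    ∀ i j, 1 ≤ i → i ≤ c.length → 1 ≤ j → j ≤ c.length →
      c.getVert i = c.getVert j → i = j := by
  intro i j hi1 hin hj1 hjn hij
  have hlen : c.support.tail.length = c.length := by
    have := c.length_support
    have h2 := c.support_eq_cons
    rw [h2] at this
    simpa using this.symm
  have hgt : ∀ k, 1 ≤ k → k ≤ c.length → c.getVert k = c.support.tail.getD (k-1) v := by
    intro k hk1 hkn
    rw [getVert_eq_support_getD c k hkn, c.support_eq_cons]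
    obtain ⟨k, rfl⟩ := Nat.exists_eq_add_of_le hk1
    simp [Nat.add_comm]
  rw [hgt i hi1 hin, hgt j hj1 hjn] at hij
  have hnd := hc.support_nodup
  have h1 : i - 1 < c.support.tail.length := by omega
  have h2 : j - 1 < c.support.tail.length := by omega
  rw [List.getD_eq_getElem _ _ h1, List.getD_eq_getElem _ _ h2] at hij
  have := (List.Nodup.getElem_inj_iff hnd).mp hij
  omega

/-- Lift a walk whose support lies in `S` to the induced subgraph. -/
def Walk.liftInduce {S : Set V} :
    ∀ {u v : V} (w : G.Walk u v) (hu : u ∈ S) (hv : v ∈ S),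
      (∀ a ∈ w.support, a ∈ S) → (G.induce S).Walk ⟨u, hu⟩ ⟨v, hv⟩
  | _, _, Walk.nil, _, _, _ => Walk.nil
  | _, _, Walk.cons h p, hu, hv, hS =>
      Walk.cons (by exact h)
        (Walk.liftInduce p (hS _ (by simp [Walk.support_cons])) hv
          (fun a ha => hS a (by simp [Walk.support_cons, ha])))

lemma Walk.liftInduce_map {S : Set V} :
    ∀ {u v : V} (w : G.Walk u v) (hu : u ∈ S) (hv : v ∈ S)
      (hS : ∀ a ∈ w.support, a ∈ S),
      (Walk.liftInduce w hu hv hS).map (Embedding.induce S).toHom = w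
  | _, _, Walk.nil, _, _, _ => rfl
  | _, _, Walk.cons h p, hu, hv, hS => by
      simp only [Walk.liftInduce, Walk.map_cons]
      exact congrArg (Walk.cons _) (Walk.liftInduce_map p _ _ _)

end Aux

/-- A *hole* is an induced cycle on at least 4 vertices, given as a closed walk:
the walk is a cycle of length at least 4, and any edge of `G` between support
vertices is an edge of the cycle. -/
def IsHole (G : SimpleGraph V) {v : V} (c : G.Walk v v) : Prop :=
  c.IsCycle ∧ 4 ≤ c.length ∧
    ∀ x y : V, x ∈ c.support → y ∈ c.support → G.Adj x y → c.toSubgraph.Adj x y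

/-- A graph is *chordal* if it contains no hole. -/
def ChordalGraph (G : SimpleGraph V) : Prop :=
  ∀ (v : V) (c : G.Walk v v), ¬ IsHole G c

/-- `N(X)`: the set of vertices outside `X` having a neighbor in `X`. -/
def extNbhd (G : SimpleGraph V) (X : Set V) : Set V :=
  {v | v ∉ X ∧ ∃ x ∈ X, G.Adj v x}

/-- If `X` is a simplicial set of vertices of `G` (i.e., `N[X]`
induces a chordal subgraph and `N(X)` induces a clique), then no hole of `G`
contains a vertex of `X`. -/
theorem stmt3 {V : Type*} (G : SimpleGraph V) (X : Set V)
    (hchordal : ChordalGraph (G.induce (X ∪ extNbhd G X)))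
    (hclique : G.IsClique (extNbhd G X))
    {h₀ : V} (c : G.Walk h₀ h₀) (hhole : IsHole G c) :
    ∀ x ∈ c.support, x ∉ X := by
  classical
  intro x hx hxX
  set S : Set V := X ∪ extNbhd G X with hSdef
  have hS : ∀ {a b : V}, G.Adj a b → a ∈ X → b ∈ S := by
    intro a b hab ha
    by_cases hb : b ∈ X
    · exact Or.inl hb
    · exact Or.inr ⟨hb, a, ha, hab.symm⟩
  obtain ⟨hcyc, hlen, hind⟩ := hhole
  -- rotate the hole to start at x
  set c' : G.Walk x x := c.rotate x hx with hc'def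
  have htsg : c'.toSubgraph = c.toSubgraph := c.toSubgraph_rotate hx
  have hsupp : ∀ y, y ∈ c'.support ↔ y ∈ c.support := by
    intro y
    rw [← Walk.mem_verts_toSubgraph, ← Walk.mem_verts_toSubgraph, htsg]
  have hcyc' : c'.IsCycle := hcyc.rotate hx
  have hlenrot : c'.length = c.length := by
    have := (c.rotate_darts x hx).perm.length_eq
    rwa [Walk.length_darts, Walk.length_darts] at this
  have hlen' : 4 ≤ c'.length := by rwa [hlenrot]
  have hind' : ∀ a b : V, a ∈ c'.support → b ∈ c'.support → G.Adj a b →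
      c'.toSubgraph.Adj a b := by
    intro a b ha hb hab
    rw [htsg]
    exact hind a b ((hsupp a).1 ha) ((hsupp b).1 hb) hab
  set n := c'.length with hn
  by_cases hall : ∀ y ∈ c'.support, y ∈ S
  · -- all of the hole is within N[X]; lift to the induced graph
    have hxS : x ∈ S := Or.inl hxX
    set w := Walk.liftInduce c' hxS hxS hall with hw
    have hmap : w.map (Embedding.induce S).toHom = c' := Walk.liftInduce_map c' hxS hxS hall
    have hinj : Function.Injective ((Embedding.induce (G := G) S).toHom : S → V) :=
      fun a b hh => Subtype.ext hh
    refine hchordal ⟨x, hxS⟩ w ⟨?_, ?_, ?_⟩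
    · rw [← Walk.map_isCycle_iff_of_injective hinj, hmap]; exact hcyc'
    · have : w.length = c'.length := by
        have h3 := Walk.length_map (Embedding.induce S).toHom w
        rw [hmap] at h3; exact h3.symm
      omega
    · intro a b ha hb hab
      have hab' : G.Adj a.1 b.1 := hab
      have ha' : (a : V) ∈ c'.support := by
        have h3 := Walk.support_map (Embedding.induce S).toHom w
        rw [hmap] at h3; rw [show c'.support = _ from h3]; exact List.mem_map.mpr ⟨_, ha, rfl⟩
      have hb' : (b : V) ∈ c'.support := by
        have h3 := Walk.support_map (Embedding.induce S).toHom w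
        rw [hmap] at h3; rw [show c'.support = _ from h3]; exact List.mem_map.mpr ⟨_, hb, rfl⟩
      have := hind' a b ha' hb' hab'
      have h3 := Walk.toSubgraph_map (Embedding.induce S).toHom w
      rw [hmap] at h3; rw [show c'.toSubgraph = _ from h3] at this
      obtain ⟨a', b', hadj, ha2, hb2⟩ := this
      have ha3 : a' = a := Subtype.ext ha2
      have hb3 : b' = b := Subtype.ext hb2
      rwa [ha3, hb3] at hadj
  · push_neg at hall
    obtain ⟨y, hy, hyS⟩ := hall
    obtain ⟨m, hm, hmn⟩ := Walk.mem_support_iff_exists_getVert.mp hy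
    have hex : ∃ k, c'.getVert k ∉ S := ⟨m, hm ▸ hyS⟩
    set i := Nat.find hex with hi
    have hPi : c'.getVert i ∉ S := Nat.find_spec hex
    have hmin : ∀ k < i, c'.getVert k ∈ S := fun k hk =>
      not_not.mp (Nat.find_min hex hk)
    have him : i ≤ m := Nat.find_le (show c'.getVert m ∉ S from hm ▸ hyS)
    have hiub : i ≤ n := le_trans him hmn
    have hg0 : c'.getVert 0 = x := c'.getVert_zero
    have hgn : c'.getVert n = x := c'.getVert_length
    have hi2 : 2 ≤ i := by
      rcases Nat.lt_or_ge i 2 with h | h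
      · interval_cases i
        · exact absurd (Or.inl (show c'.getVert 0 ∈ X by rw [hg0]; exact hxX)) hPi
        · have hadj01 : G.Adj (c'.getVert 0) (c'.getVert 1) :=
            c'.adj_getVert_succ (by omega)
          rw [hg0] at hadj01
          exact absurd (hS hadj01 hxX) hPi
      · exact h
    set j := Nat.findGreatest (fun k => c'.getVert k ∉ S) n with hj
    have hPj : c'.getVert j ∉ S :=
      Nat.findGreatest_spec (P := fun k => c'.getVert k ∉ S) hiub hPi
    have hij : i ≤ j := Nat.le_findGreatest (P := fun k => c'.getVert k ∉ S) hiub hPi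
    have hjub : j ≤ n := Nat.findGreatest_le n
    have hmax : ∀ k, j < k → k ≤ n → c'.getVert k ∈ S := fun k h1 h2 =>
      not_not.mp (Nat.findGreatest_is_greatest (P := fun k => c'.getVert k ∉ S) h1 h2)
    have hjn2 : j ≤ n - 2 := by
      have hjn : j ≠ n := fun h => hPj (by rw [h, hgn]; exact Or.inl hxX)
      have hjn1 : j ≠ n - 1 := by
        intro h
        have hadj : G.Adj (c'.getVert n) (c'.getVert (n - 1)) := by
          have := c'.adj_getVert_succ (i := n - 1) (by omega)
          have hrw : n - 1 + 1 = n := by omega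
          rw [hrw] at this
          exact this.symm
        rw [hgn] at hadj
        exact hPj (by rw [h]; exact hS hadj hxX)
      omega
    -- the two boundary vertices
    set a := c'.getVert (i - 1) with hadef
    set b := c'.getVert (j + 1) with hbdef
    have haS : a ∈ S := hmin (i - 1) (by omega)
    have hbS : b ∈ S := hmax (j + 1) (by omega) (by omega)
    have haX : a ∉ X := by
      intro haX
      have hadj : G.Adj a (c'.getVert i) := by
        have := c'.adj_getVert_succ (i := i - 1) (by omega)
        have hrw : i - 1 + 1 = i := by omega
        rw [hrw] at this
        exact this
      exact hPi (hS hadj haX)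
    have hbX : b ∉ X := by
      intro hbX
      have hadj : G.Adj b (c'.getVert j) := by
        have := c'.adj_getVert_succ (i := j) (by omega)
        exact this.symm
      exact hPj (hS hadj hbX)
    have haN : a ∈ extNbhd G X := haS.resolve_left haX
    have hbN : b ∈ extNbhd G X := hbS.resolve_left hbX
    have hinj := cycle_getVert_injOn hcyc'
    have hne : a ≠ b := by
      intro h
      have := hinj (i - 1) (j + 1) (by omega) (by omega) (by omega) (by omega) h
      omega
    have hab : G.Adj a b := hclique haN hbN hne
    have hamem : a ∈ c'.support :=
      Walk.mem_support_iff_exists_getVert.mpr ⟨i - 1, rfl, by omega⟩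
    have hbmem : b ∈ c'.support :=
      Walk.mem_support_iff_exists_getVert.mpr ⟨j + 1, rfl, by omega⟩
    have hadj := hind' a b hamem hbmem hab
    rw [Walk.toSubgraph_adj_iff] at hadj
    obtain ⟨k, hk, hkn⟩ := hadj
    rw [Sym2.eq_iff] at hk
    have hk0a : c'.getVert k = a → k ≠ 0 := by
      intro h h0
      rw [h0, hg0] at h
      exact haX (h ▸ hxX)
    have hk0b : c'.getVert k = b → k ≠ 0 := by
      intro h h0
      rw [h0, hg0] at h
      exact hbX (h ▸ hxX)
    rcases hk with ⟨h1, h2⟩ | ⟨h1, h2⟩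
    · have hk0 := hk0a h1
      have hki : k = i - 1 :=
        hinj k (i - 1) (by omega) (by omega) (by omega) (by omega) h1
      have hkj : k + 1 = j + 1 :=
        hinj (k + 1) (j + 1) (by omega) (by omega) (by omega) (by omega) h2
      omega
    · have hk0 := hk0b h1
      have hkj : k = j + 1 :=
        hinj k (j + 1) (by omega) (by omega) (by omega) (by omega) h1
      have hki : k + 1 = i - 1 :=
        hinj (k + 1) (i - 1) (by omega) (by omega) (by omega) (by omega) h2
      omega
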